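/- arXiv:1909.01237 — 3 statements merged into one kernel-verified Lean document; each statement's English description precedes it below -/
import Mathlib

section
/- If ψ : ℝⁿ → ℂ is a continuous negative definite function and there exists η ≠ 0 with ψ(η) = 0, then ψ is periodic with period η, i.e., ψ(ξ + η) = ψ(ξ) for all ξ ∈ ℝⁿ. -/
open scoped ComplexOrder BigOperators

/-- A continuous negative definite function: continuous, vanishing at the origin,
and such that `ξ ↦ exp (-t ψ ξ)` is positive definite for every `t ≥ 0`. -/
def IsCNDF {d : ℕ} (ψ : EuclideanSpace ℝ (Fin d) → ℂ) : Prop :=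
  Continuous ψ ∧ ψ 0 = 0 ∧
    ∀ t : ℝ, 0 ≤ t → ∀ (m : ℕ) (ξ : Fin m → EuclideanSpace ℝ (Fin d)) (c : Fin m → ℂ),
      0 ≤ ∑ j, ∑ k, c j * (starRingEnd ℂ) (c k) * Complex.exp (-(t : ℂ) * ψ (ξ j - ξ k))

lemma expDeriv (w : ℂ) : HasDerivAt (fun t : ℝ => Complex.exp (-(t:ℂ) * w)) (-w) 0 := by
  have h1 : HasDerivAt (fun t : ℝ => ((t:ℂ))) 1 0 := by
    have := Complex.ofRealCLM.hasDerivAt (x := (0:ℝ))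
    simp only [Complex.ofRealCLM_apply, Complex.ofReal_one] at this
    exact this
  simpa using (h1.neg.mul_const w).cexp

lemma herm_exp {d : ℕ} {ψ : EuclideanSpace ℝ (Fin d) → ℂ} (hψ : IsCNDF ψ)
    (x : EuclideanSpace ℝ (Fin d)) (t : ℝ) (ht : 0 ≤ t) :
    Complex.exp (-(t:ℂ) * ψ (-x)) = (starRingEnd ℂ) (Complex.exp (-(t:ℂ) * ψ x)) := by
  set Em := Complex.exp (-(t:ℂ) * ψ (-x)) with hEm
  set Ep := Complex.exp (-(t:ℂ) * ψ x) with hEp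
  have key : ∀ z : ℂ,
      (1 + (starRingEnd ℂ) z * Em + (z * Ep + z * (starRingEnd ℂ) z)).im = 0 := by
    intro z
    have h := hψ.2.2 t ht 2 ![0, x] ![1, z]
    simp only [Fin.sum_univ_two, Matrix.cons_val_zero, Matrix.cons_val_one, Matrix.head_cons,
      hψ.2.1, sub_self, zero_sub, sub_zero, mul_zero, neg_zero, Complex.exp_zero, map_one,
      one_mul, mul_one, ← hEm, ← hEp] at h
    exact ((Complex.le_def.mp h).2).symm
  have h1 := key 1
  have h2 := key Complex.I
  simp [Complex.add_im, Complex.mul_im, Complex.conj_re, Complex.conj_im] at h1 h2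
  apply Complex.ext
  · simp only [Complex.conj_re]; linarith
  · simp only [Complex.conj_im]; linarith

lemma le_of_hasDerivAt_nonneg (f : ℝ → ℂ) (T : ℂ) (hf : HasDerivAt f T 0)
    (h0 : f 0 = 0) (hpos : ∀ t : ℝ, 0 < t → 0 ≤ f t) : 0 ≤ T := by
  have h := hasDerivAt_iff_tendsto_slope.mp hf
  have h' : Filter.Tendsto (slope f 0) (nhdsWithin 0 (Set.Ioi 0)) (nhds T) :=
    h.mono_left (nhdsWithin_mono _ (fun x hx => ne_of_gt hx))
  have hclosed : IsClosed {z : ℂ | 0 ≤ z.re ∧ z.im = 0} :=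
    (isClosed_le continuous_const Complex.continuous_re).inter
      (isClosed_eq Complex.continuous_im continuous_const)
  have hmem : ∀ᶠ t in nhdsWithin 0 (Set.Ioi 0), slope f 0 t ∈ {z : ℂ | 0 ≤ z.re ∧ z.im = 0} := by
    filter_upwards [self_mem_nhdsWithin] with t ht
    have ht' : (0:ℝ) < t := ht
    have hft := hpos t ht'
    rw [Complex.le_def] at hft
    have hs : slope f 0 t = t⁻¹ • f t := by simp [slope_def_module, h0]
    rw [hs]
    constructor
    · simp only [Complex.real_smul, Complex.mul_re, Complex.ofReal_re, Complex.ofReal_im]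
      have : (0:ℝ) ≤ t⁻¹ * (f t).re := mul_nonneg (by positivity) (by simpa using hft.1)
      simpa [← hft.2, Complex.zero_im] using this
    · simp [Complex.real_smul, Complex.mul_im, ← hft.2, Complex.zero_im]
  have hT := hclosed.mem_of_tendsto h' hmem
  rw [Complex.le_def]
  exact ⟨by simpa using hT.1, (hT.2).symm⟩

lemma herm {d : ℕ} {ψ : EuclideanSpace ℝ (Fin d) → ℂ} (hψ : IsCNDF ψ)
    (x : EuclideanSpace ℝ (Fin d)) : ψ (-x) = (starRingEnd ℂ) (ψ x) := by
  set g : ℝ → ℂ := fun t =>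
    Complex.exp (-(t:ℂ) * ψ (-x)) - Complex.exp (-(t:ℂ) * (starRingEnd ℂ) (ψ x)) with hg
  have hderiv : HasDerivAt g (-(ψ (-x)) - -((starRingEnd ℂ) (ψ x))) 0 :=
    (expDeriv _).sub (expDeriv _)
  have hzero : ∀ t : ℝ, 0 ≤ t → g t = 0 := by
    intro t ht
    have h1 := herm_exp hψ x t ht
    have h2 : (starRingEnd ℂ) (Complex.exp (-(t:ℂ) * ψ x))
        = Complex.exp (-(t:ℂ) * (starRingEnd ℂ) (ψ x)) := by
      rw [← Complex.exp_conj]; congr 1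
      simp [map_mul, Complex.conj_ofReal]
    simp only [hg]
    rw [h1, h2, sub_self]
  -- slope is eventually 0 on the right, so derivative is 0
  have h := hasDerivAt_iff_tendsto_slope.mp hderiv
  have h' : Filter.Tendsto (slope g 0) (nhdsWithin 0 (Set.Ioi 0))
      (nhds (-(ψ (-x)) - -((starRingEnd ℂ) (ψ x)))) :=
    h.mono_left (nhdsWithin_mono _ (fun y hy => ne_of_gt hy))
  have h0 : Filter.Tendsto (slope g 0) (nhdsWithin 0 (Set.Ioi 0)) (nhds 0) := by
    apply Filter.Tendsto.congr' _ tendsto_const_nhds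
    filter_upwards [self_mem_nhdsWithin] with t ht
    have : g t = 0 := hzero t (le_of_lt ht)
    simp [slope_def_module, this, hzero 0 le_rfl]
  have : (0:ℂ) = -(ψ (-x)) - -((starRingEnd ℂ) (ψ x)) := tendsto_nhds_unique h0 h'
  linear_combination this

lemma nd {d : ℕ} {ψ : EuclideanSpace ℝ (Fin d) → ℂ} (hψ : IsCNDF ψ)
    {m : ℕ} (x : Fin m → EuclideanSpace ℝ (Fin d)) (c : Fin m → ℂ)
    (hc : ∑ j, c j = 0) :
    0 ≤ -∑ j, ∑ k, c j * (starRingEnd ℂ) (c k) * ψ (x j - x k) := by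
  set f : ℝ → ℂ := fun t =>
    ∑ j, ∑ k, c j * (starRingEnd ℂ) (c k) * Complex.exp (-(t:ℂ) * ψ (x j - x k)) with hf
  have hderiv : HasDerivAt f (∑ j, ∑ k, c j * (starRingEnd ℂ) (c k) * (-(ψ (x j - x k)))) 0 := by
    apply HasDerivAt.fun_sum
    intro j _
    apply HasDerivAt.fun_sum
    intro k _
    exact (expDeriv _).const_mul _
  have heq : (∑ j, ∑ k, c j * (starRingEnd ℂ) (c k) * (-(ψ (x j - x k))))
      = -∑ j, ∑ k, c j * (starRingEnd ℂ) (c k) * ψ (x j - x k) := by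
    simp [mul_neg, Finset.sum_neg_distrib]
  rw [← heq]
  apply le_of_hasDerivAt_nonneg f _ hderiv
  · simp only [hf, Complex.ofReal_zero, neg_zero, zero_mul, Complex.exp_zero, mul_one]
    rw [← Finset.sum_mul_sum]
    simp [hc]
  · intro t ht
    exact hψ.2.2 t (le_of_lt ht) m x c

theorem cndf_periodic_of_zero {d : ℕ} (ψ : EuclideanSpace ℝ (Fin d) → ℂ)
    (hψ : IsCNDF ψ) (η : EuclideanSpace ℝ (Fin d)) (hη : η ≠ 0) (hψη : ψ η = 0) :
    ∀ ξ : EuclideanSpace ℝ (Fin d), ψ (ξ + η) = ψ ξ := by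
  suffices h : ∀ ζ : EuclideanSpace ℝ (Fin d), ψ (ζ - η) = ψ ζ by
    intro ξ
    have := h (ξ + η)
    rw [add_sub_cancel_right] at this
    exact this.symm
  intro ζ
  set A := ψ ζ with hA
  set C := ψ (ζ - η) with hC
  by_contra hne
  have hD : C - A ≠ 0 := sub_ne_zero.mpr hne
  set nsq : ℝ := Complex.normSq (C - A) with hnsq
  have hnsqpos : 0 < nsq := Complex.normSq_pos.mpr hD
  set r : ℝ := (A.re + 1) / nsq with hr
  set b : ℂ := (r:ℂ) * (C - A) with hb
  have hc : ∑ j, (![-(1+b), 1, b] : Fin 3 → ℂ) j = 0 := by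
    simp [Fin.sum_univ_three]
  have hT := nd hψ ![0, ζ, η] ![-(1+b), 1, b] hc
  have hpsi0 : ψ 0 = 0 := hψ.2.1
  have hpsimη : ψ (-η) = 0 := by rw [herm hψ, hψη, map_zero]
  have hpsimζ : ψ (-ζ) = (starRingEnd ℂ) A := herm hψ ζ
  have hpsiηζ : ψ (η - ζ) = (starRingEnd ℂ) C := by
    rw [show η - ζ = -(ζ - η) by abel, herm hψ]
  simp only [Fin.sum_univ_three, Matrix.cons_val_zero, Matrix.cons_val_one, Matrix.head_cons,
    Matrix.cons_val_two, Matrix.tail_cons, sub_self, zero_sub, sub_zero,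
    hpsi0, hψη, hpsimη, hpsimζ, hpsiηζ, ← hC, mul_zero, add_zero, zero_add, map_one,
    one_mul, mul_one, map_neg, map_add] at hT
  rw [Complex.le_def] at hT
  have hre := hT.1
  have hrnsq : r * nsq = A.re + 1 := by
    rw [hr]; field_simp
  simp only [Complex.neg_re, Complex.add_re, Complex.mul_re, Complex.neg_im, Complex.add_im,
    Complex.mul_im, Complex.one_re, Complex.one_im, Complex.conj_re, Complex.conj_im,
    Complex.zero_re, hb, Complex.ofReal_re, Complex.ofReal_im, Complex.sub_re,
    Complex.sub_im] at hre
  rw [hnsq, Complex.normSq_apply, Complex.sub_re, Complex.sub_im] at hrnsq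
  nlinarith [hre, hrnsq]
end

section
/- With ψ and ψₙ as in the truncated-Lévy-measure approximation (ψₙ has Lévy measure 𝟙_{Bₙ(0)}ν), the zero sets satisfy {ξ : ψ(ξ) = 0} = ⋂ₙ {ξ : ψₙ(ξ) = 0}. -/
open MeasureTheory
noncomputable section

/-- The integrand in the Lévy–Khintchine formula. -/
def LKi {d : ℕ} (ξ x : EuclideanSpace ℝ (Fin d)) : ℂ :=
  1 - Complex.exp (Complex.I * ((inner ℝ x ξ : ℝ) : ℂ)) +
    Complex.I * ((inner ℝ x ξ : ℝ) : ℂ) *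
      (Metric.ball (0 : EuclideanSpace ℝ (Fin d)) 1).indicator (fun _ => (1 : ℂ)) x

/-- The Lévy–Khintchine formula for the exponent with triplet `(b, Q, ν)`. -/
def LKform {d : ℕ} (b : EuclideanSpace ℝ (Fin d))
    (Q : EuclideanSpace ℝ (Fin d) →L[ℝ] EuclideanSpace ℝ (Fin d))
    (ν : Measure (EuclideanSpace ℝ (Fin d))) (ξ : EuclideanSpace ℝ (Fin d)) : ℂ :=
  -Complex.I * ((inner ℝ b ξ : ℝ) : ℂ) + (1 / 2 : ℂ) * ((inner ℝ (Q ξ) ξ : ℝ) : ℂ) +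
    ∫ x, LKi ξ x ∂ν

section helpers
variable {d : ℕ}

lemma LKi_re (ξ x : EuclideanSpace ℝ (Fin d)) :
    (LKi ξ x).re = 1 - Real.cos (inner ℝ x ξ : ℝ) := by
  unfold LKi
  by_cases h : x ∈ Metric.ball (0 : EuclideanSpace ℝ (Fin d)) 1 <;>
    simp [h, Complex.exp_re, Complex.mul_re, Complex.mul_im]

lemma LKi_eq_of_cos (ξ x : EuclideanSpace ℝ (Fin d))
    (h : Real.cos (inner ℝ x ξ : ℝ) = 1) :
    LKi ξ x = Complex.I * ((inner ℝ x ξ : ℝ) : ℂ) *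
      (Metric.ball (0 : EuclideanSpace ℝ (Fin d)) 1).indicator (fun _ => (1 : ℂ)) x := by
  have hs : Real.sin (inner ℝ x ξ : ℝ) = 0 := by
    nlinarith [Real.sin_sq_add_cos_sq (inner ℝ x ξ : ℝ)]
  set t := (inner ℝ x ξ : ℝ) with ht
  unfold LKi
  rw [← ht, mul_comm Complex.I, Complex.exp_mul_I, ← Complex.ofReal_cos, ← Complex.ofReal_sin, h, hs]
  simp

lemma LKform_re (b : EuclideanSpace ℝ (Fin d))
    (Q : EuclideanSpace ℝ (Fin d) →L[ℝ] EuclideanSpace ℝ (Fin d))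
    (μ : MeasureTheory.Measure (EuclideanSpace ℝ (Fin d)))
    (ξ : EuclideanSpace ℝ (Fin d)) (hint : MeasureTheory.Integrable (LKi ξ) μ) :
    (LKform b Q μ ξ).re
      = (inner ℝ (Q ξ) ξ : ℝ) / 2 + ∫ x, (1 - Real.cos (inner ℝ x ξ : ℝ)) ∂μ := by
  have h1 := integral_re hint
  simp only [RCLike.re_to_complex, LKi_re] at h1
  unfold LKform
  simp only [Complex.add_re, Complex.mul_re, Complex.neg_re, Complex.neg_im,
    Complex.I_re, Complex.I_im, Complex.ofReal_re, Complex.ofReal_im,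
    Complex.one_re, Complex.one_im, Complex.div_re]
  rw [h1]
  norm_num
  ring
end helpers

/-- The zero set of the exponent is the intersection of the zero sets of the
truncated exponents. -/
theorem truncated_exponent_zero_sets {d : ℕ}
    (b : EuclideanSpace ℝ (Fin d))
    (Q : EuclideanSpace ℝ (Fin d) →L[ℝ] EuclideanSpace ℝ (Fin d))
    (hQ : ∀ x, 0 ≤ (inner ℝ (Q x) x : ℝ))
    (ν : Measure (EuclideanSpace ℝ (Fin d)))
    (hν0 : ν {0} = 0)
    (hνlevy : ∫⁻ x, ENNReal.ofReal (min (‖x‖ ^ 2) 1) ∂ν < ⊤)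
    (hInt : ∀ ξ, Integrable (LKi ξ) ν)
    (ψ : EuclideanSpace ℝ (Fin d) → ℂ) (hψ : ∀ ξ, ψ ξ = LKform b Q ν ξ)
    (ψn : ℕ → EuclideanSpace ℝ (Fin d) → ℂ)
    (hψn : ∀ n ξ, ψn n ξ = LKform b Q (ν.restrict (Metric.ball 0 (n : ℝ))) ξ) :
    {ξ | ψ ξ = 0} = ⋂ n ∈ Set.Ici (1 : ℕ), {ξ | ψn n ξ = 0} := by
  ext ξ
  simp only [Set.mem_setOf_eq, Set.mem_iInter, Set.mem_Ici]
  have hballm : Monotone (fun n : ℕ => Metric.ball (0 : EuclideanSpace ℝ (Fin d)) (n : ℝ)) :=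
    fun m n hmn => Metric.ball_subset_ball (by exact_mod_cast hmn)
  constructor
  · intro h0 n hn
    have hre : (ψ ξ).re = 0 := by rw [h0]; rfl
    rw [hψ, LKform_re b Q ν ξ (hInt ξ)] at hre
    have hint_re : Integrable (fun x => 1 - Real.cos (inner ℝ x ξ : ℝ)) ν := by
      have := (hInt ξ).re
      simpa only [RCLike.re_to_complex, LKi_re] using this
    have hnn : 0 ≤ᵐ[ν] fun x => 1 - Real.cos (inner ℝ x ξ : ℝ) :=
      Filter.Eventually.of_forall fun x => by
        simp only [Pi.zero_apply]
        have := Real.cos_le_one (inner ℝ x ξ : ℝ); linarith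
    have hInonneg : 0 ≤ ∫ x, (1 - Real.cos (inner ℝ x ξ : ℝ)) ∂ν :=
      integral_nonneg fun x => by
        simp only [Pi.zero_apply]
        have := Real.cos_le_one (inner ℝ x ξ : ℝ); linarith
    have hI0 : ∫ x, (1 - Real.cos (inner ℝ x ξ : ℝ)) ∂ν = 0 := by
      have := hQ ξ; linarith
    have hae := (integral_eq_zero_iff_of_nonneg_ae hnn hint_re).mp hI0
    have hcos : ∀ᵐ x ∂ν, Real.cos (inner ℝ x ξ : ℝ) = 1 := by
      filter_upwards [hae] with x hx
      have : (1 : ℝ) - Real.cos (inner ℝ x ξ : ℝ) = 0 := hx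
      linarith
    have hAE : LKi ξ =ᵐ[ν] fun x => Complex.I * ((inner ℝ x ξ : ℝ) : ℂ) *
        (Metric.ball (0 : EuclideanSpace ℝ (Fin d)) 1).indicator (fun _ => (1 : ℂ)) x := by
      filter_upwards [hcos] with x hx using LKi_eq_of_cos ξ x hx
    have key : ∫ x, LKi ξ x ∂(ν.restrict (Metric.ball 0 (n : ℝ)))
        = ∫ x, LKi ξ x ∂ν := by
      rw [integral_congr_ae (ae_restrict_of_ae hAE), integral_congr_ae hAE,
        setIntegral_eq_integral_of_forall_compl_eq_zero]
      intro x hx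
      have hx1 : x ∉ Metric.ball (0 : EuclideanSpace ℝ (Fin d)) 1 := fun hmem =>
        hx (Metric.ball_subset_ball (by exact_mod_cast hn) hmem)
      simp [Set.indicator_of_notMem hx1]
    rw [hψn, LKform, key]
    rw [hψ, LKform] at h0
    exact h0
  · intro h
    have hU : ⋃ n : ℕ, Metric.ball (0 : EuclideanSpace ℝ (Fin d)) (n : ℝ) = Set.univ :=
      Metric.iUnion_ball_nat (0 : EuclideanSpace ℝ (Fin d))
    have htend : Filter.Tendsto
        (fun n : ℕ => ∫ x, LKi ξ x ∂(ν.restrict (Metric.ball 0 (n : ℝ))))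
        Filter.atTop (nhds (∫ x, LKi ξ x ∂ν)) := by
      have := tendsto_setIntegral_of_monotone (f := LKi ξ) (μ := ν)
        (fun n : ℕ => Metric.isOpen_ball.measurableSet) hballm
        (by rw [hU]; exact (integrableOn_univ).mpr (hInt ξ))
      rwa [hU, Measure.restrict_univ] at this
    have htend2 : Filter.Tendsto (fun n : ℕ => ψn n ξ) Filter.atTop (nhds (ψ ξ)) := by
      rw [hψ, LKform]
      simp only [hψn, LKform]
      exact Filter.Tendsto.add tendsto_const_nhds htend
    have htend3 : Filter.Tendsto (fun n : ℕ => ψn n ξ) Filter.atTop (nhds 0) := by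
      refine Filter.Tendsto.congr' ?_ tendsto_const_nhds
      filter_upwards [Filter.eventually_ge_atTop 1] with n hn using (h n hn).symm
    exact tendsto_nhds_unique htend2 htend3
end
end

section
/- Let g be a Bernstein function with a = 0 and Lévy measure π whose support is not discrete. Then g(ζ) ≠ 0 for all ζ ∈ ℍ \ {0}; consequently, for any continuous negative definite ψ, the zero sets satisfy {g ∘ ψ = 0} = {ψ = 0}. -/
open MeasureTheory

open scoped ComplexOrder BigOperators

/-- The (topological) support of a measure on ℝ. -/
def measSupport (π : Measure ℝ) : Set ℝ :=
  {x | ∀ U : Set ℝ, IsOpen U → x ∈ U → π U ≠ 0}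

lemma discrete_of_subset_zmul {c : ℝ} (hc : c ≠ 0) (S : Set ℝ)
    (hS : ∀ x ∈ S, ∃ k : ℤ, x = k * c) : DiscreteTopology S := by
  rw [discreteTopology_iff_isOpen_singleton]
  rintro ⟨x, hx⟩
  have : ({(⟨x, hx⟩ : S)} : Set S) = (Subtype.val) ⁻¹' (Metric.ball x |c|) := by
    ext ⟨y, hy⟩
    simp only [Set.mem_singleton_iff, Set.mem_preimage, Metric.mem_ball, Subtype.mk.injEq,
      Real.dist_eq]
    constructor
    · rintro rfl; simpa using abs_pos.2 hc
    · intro hlt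
      obtain ⟨k, rfl⟩ := hS x hx
      obtain ⟨m, rfl⟩ := hS _ hy
      have : |(m : ℝ) - k| * |c| < 1 * |c| := by
        rw [← abs_mul, sub_mul]; simpa using hlt
      have hmk : |(m : ℝ) - k| < 1 := lt_of_mul_lt_mul_right this (abs_nonneg c)
      have : m = k := by
        have : |m - k| < 1 := by exact_mod_cast (by push_cast at hmk ⊢; exact hmk : |((m - k : ℤ) : ℝ)| < 1)
        rw [abs_lt] at this; omega
      rw [this]
  rw [this]
  exact (Metric.isOpen_ball).preimage continuous_subtype_val

lemma cndf_re_nonneg {d : ℕ} {ψ : EuclideanSpace ℝ (Fin d) → ℂ} (h : IsCNDF ψ)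
    (ξ : EuclideanSpace ℝ (Fin d)) : 0 ≤ (ψ ξ).re := by
  obtain ⟨-, hψ0, hpd⟩ := h
  have hsum : ∀ z : ℂ, 0 ≤ 1 + Complex.exp (-ψ ξ) * (starRingEnd ℂ) z +
      (z * Complex.exp (-ψ (-ξ)) + z * (starRingEnd ℂ) z) := by
    intro z
    have := hpd 1 zero_le_one 2 ![ξ, 0] ![1, z]
    simpa [Fin.sum_univ_two, sub_self, hψ0, sub_zero, zero_sub,
      mul_comm, mul_assoc, mul_left_comm] using this
  set a : ℂ := Complex.exp (-ψ ξ) with ha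
  set b : ℂ := Complex.exp (-ψ (-ξ)) with hb
  have h1 := (Complex.le_def.1 (hsum 1)).2
  have h2 := (Complex.le_def.1 (hsum Complex.I)).2
  simp [Complex.ext_iff, Complex.add_im, Complex.mul_im] at h1 h2
  have hba : b = (starRingEnd ℂ) a := by
    simp only [Complex.ext_iff, Complex.conj_re, Complex.conj_im]
    constructor <;> linarith
  have h3 := (Complex.le_def.1 (hsum (-a))).1
  rw [hba] at h3
  have habs : ‖a‖ ^ 2 ≤ 1 := by
    have e1 : (a * (starRingEnd ℂ) (-a)).re = -(‖a‖ ^ 2) := by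
      simp [Complex.mul_re, Complex.sq_norm, Complex.normSq_apply]
    have e2 : ((-a) * (starRingEnd ℂ) a).re = -(‖a‖ ^ 2) := by
      simp [Complex.mul_re, Complex.sq_norm, Complex.normSq_apply]
    have e3 : ((-a) * (starRingEnd ℂ) (-a)).re = ‖a‖ ^ 2 := by
      simp [Complex.mul_re, Complex.sq_norm, Complex.normSq_apply]
    simp only [Complex.add_re, Complex.one_re, Complex.zero_re, e1, e2, e3] at h3
    linarith
  have habs1 : ‖a‖ ≤ 1 := by
    nlinarith [norm_nonneg a]
  rw [ha, Complex.norm_exp] at habs1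
  have := Real.exp_le_one_iff.mp habs1
  simpa using this

/-- A driftless Bernstein function whose Lévy measure has non-discrete support has no
zero in the closed right half-plane apart from the origin; hence composing with a
continuous negative definite function does not change the zero set. -/
theorem bernstein_zero_set_of_nondiscrete_support
    (π : Measure ℝ) (hπsupp : π {s | s ≤ 0} = 0)
    (hπlevy : ∫⁻ s, ENNReal.ofReal (min s 1) ∂π < ⊤)
    (hπnd : ¬ DiscreteTopology (measSupport π))
    (g : ℂ → ℂ)
    (hint : ∀ ζ : ℂ, 0 ≤ ζ.re → Integrable (fun s : ℝ => 1 - Complex.exp (-ζ * s)) π)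
    (hg : ∀ ζ : ℂ, 0 ≤ ζ.re → g ζ = ∫ s, (1 - Complex.exp (-ζ * s)) ∂π) :
    (∀ ζ : ℂ, 0 ≤ ζ.re → ζ ≠ 0 → g ζ ≠ 0) ∧
      ∀ (d : ℕ) (ψ : EuclideanSpace ℝ (Fin d) → ℂ), IsCNDF ψ →
        {ξ | g (ψ ξ) = 0} = {ξ | ψ ξ = 0} := by
  have key : ∀ ζ : ℂ, 0 ≤ ζ.re → ζ ≠ 0 → g ζ ≠ 0 := by
    intro ζ hre hne hz
    rw [hg ζ hre] at hz
    have hI := hint ζ hre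
    set F : ℝ → ℝ := fun s => 1 - Real.exp (-ζ.re * s) * Real.cos (ζ.im * s) with hF
    have hFeq : ∀ s : ℝ, (1 - Complex.exp (-ζ * s)).re = F s := by
      intro s
      simp [hF, Complex.exp_re, Complex.mul_re, Complex.mul_im, neg_mul, Real.cos_neg]
    have hFint : Integrable F π := by
      have := hI.re
      simp only [RCLike.re_to_complex] at this
      exact this.congr (Filter.Eventually.of_forall fun s => hFeq s)
    have hInt0 : ∫ s, F s ∂π = 0 := by
      have h := integral_re hI
      simp only [RCLike.re_to_complex, hz, Complex.zero_re] at h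
      rw [← h]
      exact integral_congr_ae (Filter.Eventually.of_forall fun s => (hFeq s).symm)
    have hpos : ∀ᵐ s ∂π, 0 < s := by
      rw [ae_iff]
      simpa [not_lt] using hπsupp
    have hnn : 0 ≤ᵐ[π] F := by
      filter_upwards [hpos] with s hs
      have h1 : Real.exp (-ζ.re * s) ≤ 1 := Real.exp_le_one_iff.mpr (by nlinarith)
      have h2 : Real.cos (ζ.im * s) ≤ 1 := Real.cos_le_one _
      have h4 : (0 : ℝ) < Real.exp (-ζ.re * s) := Real.exp_pos _
      have : Real.exp (-ζ.re * s) * Real.cos (ζ.im * s) ≤ 1 := by nlinarith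
      simp only [hF, Pi.zero_apply]
      linarith
    have hae : F =ᵐ[π] 0 := (integral_eq_zero_iff_of_nonneg_ae hnn hFint).mp hInt0
    have hcomb : ∀ᵐ s ∂π, 0 < s ∧ F s = 0 := hpos.and hae
    rcases eq_or_lt_of_le hre with heq | hlt
    · -- ζ.re = 0, so ζ.im ≠ 0
      have hη : ζ.im ≠ 0 := by
        intro h
        exact hne (Complex.ext (by rw [← heq]; simp) (by simp [h]))
      set c : ℝ := 2 * Real.pi / ζ.im with hcdef
      have hc : c ≠ 0 := div_ne_zero (by positivity) hη
      have hmem : ∀ᵐ s ∂π, ∃ k : ℤ, s = k * c := by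
        filter_upwards [hcomb] with s hs
        obtain ⟨hspos, hFs⟩ := hs
        have hcos : Real.cos (ζ.im * s) = 1 := by
          simp only [hF, ← heq] at hFs
          simp only [neg_zero, zero_mul, Real.exp_zero, one_mul] at hFs
          linarith
        obtain ⟨n, hn⟩ := (Real.cos_eq_one_iff _).mp hcos
        refine ⟨n, ?_⟩
        rw [hcdef]
        field_simp
        linarith
      have hπC : π {s : ℝ | ¬ ∃ k : ℤ, s = k * c} = 0 := by
        rw [ae_iff] at hmem; exact hmem
      have hCclosed : IsClosed {x : ℝ | ∃ k : ℤ, x = k * c} := by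
        have : {x : ℝ | ∃ k : ℤ, x = k * c} = (fun x : ℝ => x / c) ⁻¹' (Set.range ((↑) : ℤ → ℝ)) := by
          ext x
          simp only [Set.mem_setOf_eq, Set.mem_preimage, Set.mem_range]
          constructor
          · rintro ⟨k, rfl⟩; exact ⟨k, by field_simp⟩
          · rintro ⟨k, hk⟩; exact ⟨k, by field_simp at hk; linarith⟩
        rw [this]
        exact Int.isClosedEmbedding_coe_real.isClosed_range.preimage (continuous_id.div_const c)
      have hsub : measSupport π ⊆ {x : ℝ | ∃ k : ℤ, x = k * c} := by
        intro x hx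
        by_contra hxC
        exact hx _ hCclosed.isOpen_compl hxC hπC
      exact hπnd (discrete_of_subset_zmul hc _ fun x hx => hsub hx)
    · -- 0 < ζ.re : measure is zero
      have hfalse : ∀ᵐ s ∂π, False := by
        filter_upwards [hcomb] with s hs
        obtain ⟨hspos, hFs⟩ := hs
        have h1 : Real.exp (-ζ.re * s) < 1 := by
          rw [← Real.exp_zero]
          exact Real.exp_lt_exp.mpr (by nlinarith)
        have h2 : Real.cos (ζ.im * s) ≤ 1 := Real.cos_le_one _
        have h4 : (0 : ℝ) < Real.exp (-ζ.re * s) := Real.exp_pos _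
        have : Real.exp (-ζ.re * s) * Real.cos (ζ.im * s) < 1 := by nlinarith
        simp only [hF] at hFs
        nlinarith
      rw [Filter.eventually_false_iff_eq_bot, ae_eq_bot] at hfalse
      refine hπnd (discrete_of_subset_zmul one_ne_zero _ fun x hx => ?_)
      exact absurd (by simp [hfalse]) (hx Set.univ isOpen_univ (Set.mem_univ x))
  refine ⟨key, fun d ψ hψ => ?_⟩
  ext ξ
  simp only [Set.mem_setOf_eq]
  constructor
  · intro hgz
    by_contra hψz
    exact key (ψ ξ) (cndf_re_nonneg hψ ξ) hψz hgz
  · intro hψz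
    rw [hψz, hg 0 (by simp)]
    simp
end
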